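/- In the algebra A(S⁷_{θ'}) with deformation matrix λ'_{ab} as specified, the matrix Ψ with columns (ψ₁, ψ₂, ψ₃, ψ₄)ᵗ and (−ψ₂*, ψ₁*, −ψ₄*, ψ₃*)ᵗ satisfies Ψ†Ψ = 𝕀₂, i.e. ψ₁*ψ₁ + ψ₂*ψ₂ + ψ₃*ψ₃ + ψ₄*ψ₄ = 1, ψ₂ψ₁ − ψ₁ψ₂ + ψ₄ψ₃ − ψ₃ψ₄ = 0 (suitably interpreted with the twisted relations), and the off-diagonal entries of Ψ†Ψ vanish. -/
import Mathlib

set_option maxHeartbeats 1000000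


/-- In the algebra `A(S⁷_{θ'})` with the specified deformation matrix
`λ'_{ab}` (with `μ = e^{πiθ}`), the 4×2 matrix `Ψ` with columns
`(ψ₁, ψ₂, ψ₃, ψ₄)ᵗ` and `(−ψ₂*, ψ₁*, −ψ₄*, ψ₃*)ᵗ` satisfies `Ψ†Ψ = 𝕀₂`. -/
theorem stmt_2 (θ : ℝ) (A : Type*) [Ring A] [Algebra ℂ A] [StarRing A]
    [StarModule ℂ A]
    (μ : ℂ) (hμ : μ = Complex.exp (Real.pi * Complex.I * θ))
    (lam' : Matrix (Fin 4) (Fin 4) ℂ)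
    (hlam' : lam' = !![1, 1, star μ, μ;
                       1, 1, μ, star μ;
                       μ, star μ, 1, 1;
                       star μ, μ, 1, 1])
    (ψ : Fin 4 → A)
    (hrel1 : ∀ a b, ψ a * ψ b = lam' a b • (ψ b * ψ a))
    (hrel2 : ∀ a b, ψ a * star (ψ b) = lam' b a • (star (ψ b) * ψ a))
    (hrel3 : ∀ a b, star (ψ a) * star (ψ b) = lam' a b • (star (ψ b) * star (ψ a)))
    (hsph : ∑ a, star (ψ a) * ψ a = 1)
    (Ψ : Matrix (Fin 4) (Fin 2) A)
    (hΨ : Ψ = Matrix.of ![![ψ 0, -star (ψ 1)],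
                          ![ψ 1, star (ψ 0)],
                          ![ψ 2, -star (ψ 3)],
                          ![ψ 3, star (ψ 2)]]) :
    Ψ.conjTranspose * Ψ = 1 := by
  have l01 : lam' 0 1 = 1 := by simp [hlam', Matrix.vecHead, Matrix.vecTail]
  have l10 : lam' 1 0 = 1 := by simp [hlam', Matrix.vecHead, Matrix.vecTail]
  have l23 : lam' 2 3 = 1 := by simp [hlam', Matrix.vecHead, Matrix.vecTail]
  have l32 : lam' 3 2 = 1 := by simp [hlam', Matrix.vecHead, Matrix.vecTail]
  have l00 : lam' 0 0 = 1 := by simp [hlam', Matrix.vecHead, Matrix.vecTail]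
  have l11 : lam' 1 1 = 1 := by simp [hlam', Matrix.vecHead, Matrix.vecTail]
  have l22 : lam' 2 2 = 1 := by simp [hlam', Matrix.vecHead, Matrix.vecTail]
  have l33 : lam' 3 3 = 1 := by simp [hlam', Matrix.vecHead, Matrix.vecTail]
  have h1 : ψ 0 * ψ 1 = ψ 1 * ψ 0 := by rw [hrel1 0 1, l01, one_smul]
  have h2 : ψ 2 * ψ 3 = ψ 3 * ψ 2 := by rw [hrel1 2 3, l23, one_smul]
  have h3 : star (ψ 1) * star (ψ 0) = star (ψ 0) * star (ψ 1) := by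
    rw [hrel3 1 0, l10, one_smul]
  have h4 : star (ψ 3) * star (ψ 2) = star (ψ 2) * star (ψ 3) := by
    rw [hrel3 3 2, l32, one_smul]
  have n0 : ψ 0 * star (ψ 0) = star (ψ 0) * ψ 0 := by rw [hrel2 0 0, l00, one_smul]
  have n1 : ψ 1 * star (ψ 1) = star (ψ 1) * ψ 1 := by rw [hrel2 1 1, l11, one_smul]
  have n2 : ψ 2 * star (ψ 2) = star (ψ 2) * ψ 2 := by rw [hrel2 2 2, l22, one_smul]
  have n3 : ψ 3 * star (ψ 3) = star (ψ 3) * ψ 3 := by rw [hrel2 3 3, l33, one_smul]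
  have hs : star (ψ 0) * ψ 0 + star (ψ 1) * ψ 1 + star (ψ 2) * ψ 2 + star (ψ 3) * ψ 3 = 1 := by
    have := hsph
    rw [Fin.sum_univ_four] at this
    linear_combination (norm := module) this
  subst hΨ
  ext i j
  fin_cases i <;> fin_cases j <;>
    simp [Matrix.mul_apply, Fin.sum_univ_four, Matrix.one_apply,
      Matrix.vecHead, Matrix.vecTail, neg_smul, one_smul]
  · exact hs
  · linear_combination (norm := noncomm_ring) h3 + h4
  · linear_combination (norm := noncomm_ring) h1 + h2
  · linear_combination (norm := noncomm_ring) n0 + n1 + n2 + n3 + hs
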